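/- arXiv:2508.00181 — 2 statements merged into one kernel-verified Lean document; each statement's English description precedes it below -/
import Mathlib

section
/- In a circuit-free digraph Γ on a finite node set N, the number of maximal spanning forests of Γ equals the product over all non-source nodes i (nodes with at least one incoming arc) of the in-degree of i. -/
open scoped Classical
open Finset

section Preamble

variable {V : Type*} [Fintype V] [DecidableEq V]

/-- Adjacency relation of a digraph given by its arc set. -/
def Adj (A : Finset (V × V)) (i j : V) : Prop := (i, j) ∈ A

/-- A digraph is circuit-free if it contains no directed cycle. -/
def CircuitFree (A : Finset (V × V)) : Prop :=
  ∀ i : V, ¬ Relation.TransGen (Adj A) i i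

/-- In-degree of a node. -/
def inDeg (A : Finset (V × V)) (j : V) : ℕ :=
  (A.filter (fun a => a.2 = j)).card

/-- Weak connectivity (chains, ignoring orientation). -/
def WConn (A : Finset (V × V)) (i j : V) : Prop :=
  Relation.ReflTransGen (fun a b => (a, b) ∈ A ∨ (b, a) ∈ A) i j

/-- The weakly connected component of `i`, as a finset. -/
noncomputable def compF (A : Finset (V × V)) (i : V) : Finset V :=
  Finset.univ.filter (fun j => WConn A i j)

/-- `IsPath A p` : `p` is a (nonempty) directed path along arcs of `A`. -/
def IsPath (A : Finset (V × V)) : List V → Prop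
  | [] => False
  | [_] => True
  | i :: j :: l => (i, j) ∈ A ∧ IsPath A (j :: l)

/-- The digraph `A` restricted to the node set `K` is an arborescence:
there is a root `r ∈ K` with a unique directed path from `r` to every node of `K`. -/
def IsArbOn (A : Finset (V × V)) (K : Set V) : Prop :=
  ∃ r ∈ K, ∀ i ∈ K, ∃! p : List V,
    IsPath A p ∧ p.head? = some r ∧ p.getLast? = some i

/-- A forest: every weakly connected component is an arborescence. -/
def IsForest (A : Finset (V × V)) : Prop :=
  ∀ i : V, IsArbOn A {j | WConn A i j}

/-- `F` is a maximal spanning forest of the digraph `A`. -/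
def IsMaxSpanningForest (A F : Finset (V × V)) : Prop :=
  F ⊆ A ∧ IsForest F ∧ ∀ a ∈ A, a ∉ F → ¬ IsForest (insert a F)

/-- The collection of all maximal spanning forests of `A`. -/
noncomputable def maxForests (A : Finset (V × V)) : Finset (Finset (V × V)) :=
  A.powerset.filter (fun F => IsMaxSpanningForest A F)

/-- `S̄_F(i)` : the node `i` together with all its successors in `F`. -/
noncomputable def succSet (F : Finset (V × V)) (i : V) : Finset V :=
  Finset.univ.filter (fun j => Relation.ReflTransGen (Adj F) i j)

/-- `Ŝ_F(i)` : the immediate successors of `i` in `F`. -/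
noncomputable def immSucc (F : Finset (V × V)) (i : V) : Finset V :=
  Finset.univ.filter (fun j => (i, j) ∈ F)

/-- Marginal contribution of player `i` with respect to the forest `F`. -/
noncomputable def marg (v : Finset V → ℝ) (F : Finset (V × V)) (i : V) : ℝ :=
  v (succSet F i) - ∑ j ∈ immSucc F i, v (succSet F j)

/-- The Average Forest leadership measure. -/
noncomputable def AF (v : Finset V → ℝ) (A : Finset (V × V)) (i : V) : ℝ :=
  (∑ F ∈ maxForests A, marg v F i) / (maxForests A).card

/-- The node sets of the arborescence components of a forest `F`. -/
noncomputable def comps (F : Finset (V × V)) : Finset (Finset V) :=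
  Finset.univ.image (fun i => compF F i)

/-- Productivity of the organisational situation. -/
noncomputable def Productivity (v : Finset V → ℝ) (A : Finset (V × V)) : ℝ :=
  (∑ F ∈ maxForests A, ∑ K ∈ comps F, v K) / (maxForests A).card

/-- Superadditivity of a TU game. -/
def Superadditive (v : Finset V → ℝ) : Prop :=
  ∀ S Q : Finset V, Disjoint S Q → v S + v Q ≤ v (S ∪ Q)

/-- Weak connectedness of the digraph. -/
def WeaklyConnected (A : Finset (V × V)) : Prop :=
  ∀ i j : V, WConn A i j

/-- Quasi-strong connectedness: existence of a root reaching every node. -/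
def HasRoot (A : Finset (V × V)) : Prop :=
  ∃ r : V, ∀ i : V, Relation.ReflTransGen (Adj A) r i

end Preamble
section Aux

variable {V : Type*} [Fintype V] [DecidableEq V]

lemma isPath_ne_nil {A : Finset (V × V)} {p : List V} (h : IsPath A p) : p ≠ [] := by
  cases p <;> simp_all [IsPath]

lemma head?_append_singleton {p : List V} (hp : p ≠ []) (y : V) :
    (p ++ [y]).head? = p.head? := by
  cases p with
  | nil => exact absurd rfl hp
  | cons a t => rfl

lemma isPath_concat {A : Finset (V × V)} :
    ∀ {p : List V} {x y : V}, IsPath A p → p.getLast? = some x → (x, y) ∈ A →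
      IsPath A (p ++ [y])
  | [], _, _, h, _, _ => h.elim
  | [a], x, y, _, hl, ha => by
      simp only [List.getLast?_singleton, Option.some.injEq] at hl
      subst hl
      exact ⟨ha, trivial⟩
  | a :: b :: l, x, y, h, hl, ha => by
      obtain ⟨h1, h2⟩ := h
      exact ⟨h1, isPath_concat h2 (by simpa using hl) ha⟩

lemma isPath_decomp {A : Finset (V × V)} :
    ∀ {q : List V} {y : V}, IsPath A q → q.getLast? = some y →
      q = [y] ∨ ∃ p x, q = p ++ [y] ∧ IsPath A p ∧ p.getLast? = some x ∧ (x, y) ∈ A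
  | [], _, h, _ => h.elim
  | [a], y, _, hl => by
      simp only [List.getLast?_singleton, Option.some.injEq] at hl
      subst hl; exact Or.inl rfl
  | a :: b :: l, y, h, hl => by
      obtain ⟨h1, h2⟩ := h
      have hl' : (b :: l).getLast? = some y := by simpa using hl
      rcases isPath_decomp h2 hl' with h3 | ⟨p, x, hq, hp, hpl, hxy⟩
      · refine Or.inr ⟨[a], a, ?_, trivial, rfl, ?_⟩
        · rw [h3]; rfl
        · have hby : b = y ∧ l = [] := by simpa using h3
          rwa [← hby.1]
      · cases p with
        | nil => exact absurd (isPath_ne_nil hp) (by simp)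
        | cons c rest =>
          have hb : c = b := by
            have := hq; simp only [List.cons_append] at this
            exact (List.cons.injEq _ _ _ _ ▸ this).1.symm
          subst hb
          refine Or.inr ⟨a :: c :: rest, x, ?_, ⟨h1, hp⟩, by simpa using hpl, hxy⟩
          simp [hq]

lemma isPath_rtg {A : Finset (V × V)} :
    ∀ {p : List V} {a b : V}, IsPath A p → p.head? = some a → p.getLast? = some b →
      Relation.ReflTransGen (Adj A) a b
  | [], _, _, h, _, _ => h.elim
  | [c], a, b, _, hh, hl => by
      simp only [List.head?_cons, Option.some.injEq] at hh
      simp only [List.getLast?_singleton, Option.some.injEq] at hl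
      subst hh; subst hl; exact Relation.ReflTransGen.refl
  | c :: d :: l, a, b, h, hh, hl => by
      obtain ⟨h1, h2⟩ := h
      have ha : c = a := by simpa using hh
      subst ha
      exact Relation.ReflTransGen.head h1 (isPath_rtg h2 rfl (by simpa using hl))

lemma path_unique {G : Finset (V × V)} (hcf : CircuitFree G)
    (huniq : ∀ {x z j : V}, (x, j) ∈ G → (z, j) ∈ G → x = z) :
    ∀ n (p q : List V) (r i : V), p.length ≤ n → IsPath G p → p.head? = some r →
      p.getLast? = some i → IsPath G q → q.head? = some r → q.getLast? = some i → p = q := by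
  intro n
  induction n with
  | zero =>
    intro p q r i hn hp _ _ _ _ _
    cases p with
    | nil => exact hp.elim
    | cons a t => simp at hn
  | succ n ih =>
    intro p q r i hn hp hph hpl hq hqh hql
    rcases isPath_decomp hp hpl with hp1 | ⟨p', x, hpe, hp', hp'l, hxi⟩
    · -- p = [i], so r = i
      have hri : r = i := by rw [hp1] at hph; exact (show i = r by simpa using hph).symm
      subst hri
      rcases isPath_decomp hq hql with hq1 | ⟨q', z, hqe, hq', hq'l, hzi⟩
      · rw [hp1, hq1]
      · exfalso
        have hqh' : q'.head? = some r := by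
          rw [hqe, head?_append_singleton (isPath_ne_nil hq')] at hqh; exact hqh
        have := isPath_rtg hq' hqh' hq'l
        exact hcf r (Relation.TransGen.tail' this hzi)
    · rcases isPath_decomp hq hql with hq1 | ⟨q', z, hqe, hq', hq'l, hzi⟩
      · exfalso
        have hri : r = i := by rw [hq1] at hqh; exact (show i = r by simpa using hqh).symm
        subst hri
        have hph' : p'.head? = some r := by
          rw [hpe, head?_append_singleton (isPath_ne_nil hp')] at hph; exact hph
        have := isPath_rtg hp' hph' hp'l
        exact hcf r (Relation.TransGen.tail' this hxi)
      · have hxz : x = z := huniq hxi hzi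
        subst hxz
        have hph' : p'.head? = some r := by
          rw [hpe, head?_append_singleton (isPath_ne_nil hp')] at hph; exact hph
        have hqh' : q'.head? = some r := by
          rw [hqe, head?_append_singleton (isPath_ne_nil hq')] at hqh; exact hqh
        have hlen : p'.length ≤ n := by
          have : p.length = p'.length + 1 := by rw [hpe]; simp
          omega
        rw [hpe, hqe, ih p' q' r x hlen hp' hph' hp'l hq' hqh' hq'l]

lemma forest_unique_in {G : Finset (V × V)} (hG : IsForest G) {x z j : V}
    (hx : (x, j) ∈ G) (hz : (z, j) ∈ G) : x = z := by
  obtain ⟨r, hr, hu⟩ := hG j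
  have hjx : WConn G j x := Relation.ReflTransGen.single (Or.inr hx)
  have hjz : WConn G j z := Relation.ReflTransGen.single (Or.inr hz)
  have hjj : WConn G j j := Relation.ReflTransGen.refl
  obtain ⟨pj, hpj, hpju⟩ := hu j hjj
  obtain ⟨px, hpx, _⟩ := hu x hjx
  obtain ⟨pz, hpz, _⟩ := hu z hjz
  have h1 : px ++ [j] = pj := hpju _ ⟨isPath_concat hpx.1 hpx.2.2 hx,
    by rw [head?_append_singleton (isPath_ne_nil hpx.1)]; exact hpx.2.1, List.getLast?_concat⟩
  have h2 : pz ++ [j] = pj := hpju _ ⟨isPath_concat hpz.1 hpz.2.2 hz,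
    by rw [head?_append_singleton (isPath_ne_nil hpz.1)]; exact hpz.2.1, List.getLast?_concat⟩
  have hpq : px = pz := by
    have := h1.trans h2.symm
    exact List.append_cancel_right this
  have := hpx.2.2
  rw [hpq, hpz.2.2] at this
  exact (Option.some.inj this).symm

lemma inDeg_pos_of_mem {F : Finset (V × V)} {x j : V} (h : (x, j) ∈ F) : 0 < inDeg F j :=
  Finset.card_pos.mpr ⟨(x, j), Finset.mem_filter.mpr ⟨h, rfl⟩⟩

lemma uniq_of_deg_le_one {F : Finset (V × V)} (hdeg : ∀ j, inDeg F j ≤ 1)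
    {x z j : V} (hx : (x, j) ∈ F) (hz : (z, j) ∈ F) : x = z := by
  have := Finset.card_le_one.mp (hdeg j) (x, j) (Finset.mem_filter.mpr ⟨hx, rfl⟩)
    (z, j) (Finset.mem_filter.mpr ⟨hz, rfl⟩)
  exact congrArg Prod.fst this

lemma circuitFree_subset {A F : Finset (V × V)} (hFA : F ⊆ A) (hA : CircuitFree A) :
    CircuitFree F := fun i h =>
  hA i (Relation.TransGen.mono (fun _ _ hab => hFA hab) i i h)

lemma exists_root_aux {F : Finset (V × V)} (hF : CircuitFree F) :
    ∀ n (i : V), (Finset.univ.filter fun j => Relation.ReflTransGen (Adj F) j i).card ≤ n →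
      ∃ r, inDeg F r = 0 ∧ Relation.ReflTransGen (Adj F) r i := by
  intro n
  induction n with
  | zero =>
    intro i hi
    exfalso
    have : i ∈ Finset.univ.filter fun j => Relation.ReflTransGen (Adj F) j i :=
      Finset.mem_filter.mpr ⟨Finset.mem_univ _, Relation.ReflTransGen.refl⟩
    have := Finset.card_pos.mpr ⟨i, this⟩
    omega
  | succ n ih =>
    intro i hi
    by_cases h : inDeg F i = 0
    · exact ⟨i, h, Relation.ReflTransGen.refl⟩
    · obtain ⟨a, ha⟩ := Finset.card_pos.mp (Nat.pos_of_ne_zero h)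
      rw [Finset.mem_filter] at ha
      have hxi : (a.1, i) ∈ F := by rw [show ((a.1, i) : V × V) = a from Prod.ext rfl ha.2.symm]; exact ha.1
      have hsub : (Finset.univ.filter fun j => Relation.ReflTransGen (Adj F) j a.1) ⊂
          Finset.univ.filter fun j => Relation.ReflTransGen (Adj F) j i := by
        constructor
        · intro j hj
          rw [Finset.mem_filter] at *
          exact ⟨hj.1, hj.2.tail hxi⟩
        · intro hcon
          have : i ∈ Finset.univ.filter fun j => Relation.ReflTransGen (Adj F) j a.1 :=
            hcon (Finset.mem_filter.mpr ⟨Finset.mem_univ _, Relation.ReflTransGen.refl⟩)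
          rw [Finset.mem_filter] at this
          exact hF i (Relation.TransGen.tail' this.2 hxi)
      have := Finset.card_lt_card hsub
      obtain ⟨r, hr0, hr⟩ := ih a.1 (by omega)
      exact ⟨r, hr0, hr.tail hxi⟩

lemma exists_path {F : Finset (V × V)} {r i : V} (h : Relation.ReflTransGen (Adj F) r i) :
    ∃ p, IsPath F p ∧ p.head? = some r ∧ p.getLast? = some i := by
  induction h with
  | refl => exact ⟨[r], trivial, rfl, rfl⟩
  | @tail b c _ hbc ih =>
    obtain ⟨p, hp, hh, hl⟩ := ih
    exact ⟨p ++ [c], isPath_concat hp hl hbc,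
      (head?_append_singleton (isPath_ne_nil hp) c).trans hh, List.getLast?_concat⟩

lemma root_reaches_of_wconn {F : Finset (V × V)} (hdeg : ∀ j, inDeg F j ≤ 1)
    {r i j : V} (hr0 : inDeg F r = 0) (hri : Relation.ReflTransGen (Adj F) r i)
    (hij : WConn F i j) : Relation.ReflTransGen (Adj F) r j := by
  induction hij with
  | refl => exact hri
  | @tail b c _ hbc ih =>
    rcases hbc with hbc | hcb
    · exact ih.tail hbc
    · rcases ih.cases_tail with h | ⟨d, hrd, hdb⟩
      · exfalso
        rw [h] at hcb
        have := inDeg_pos_of_mem hcb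
        omega
      · have : d = c := uniq_of_deg_le_one hdeg hdb hcb
        rwa [this] at hrd

lemma wconn_symm {F : Finset (V × V)} {i j : V} (h : WConn F i j) : WConn F j i :=
  Relation.ReflTransGen.mono (fun _ _ hab => Or.symm hab) j i (Relation.ReflTransGen.swap j i h)

lemma wconn_of_rtg {F : Finset (V × V)} {i j : V} (h : Relation.ReflTransGen (Adj F) i j) :
    WConn F i j := Relation.ReflTransGen.mono (fun _ _ hab => Or.inl hab) i j h

lemma isForest_of {F : Finset (V × V)} (hcf : CircuitFree F)
    (hdeg : ∀ j, inDeg F j ≤ 1) : IsForest F := by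
  intro i
  obtain ⟨r, hr0, hri⟩ := exists_root_aux hcf _ i le_rfl
  refine ⟨r, wconn_symm (wconn_of_rtg hri), fun j hj => ?_⟩
  have hrj : Relation.ReflTransGen (Adj F) r j := root_reaches_of_wconn hdeg hr0 hri hj
  obtain ⟨p, hp, hph, hpl⟩ := exists_path hrj
  refine ⟨p, ⟨hp, hph, hpl⟩, fun q ⟨hq, hqh, hql⟩ => ?_⟩
  exact path_unique hcf (fun hx hz => uniq_of_deg_le_one hdeg hx hz) q.length q p r j le_rfl
    hq hqh hql hp hph hpl

lemma maxForests_eq {A : Finset (V × V)} (hA : CircuitFree A) :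
    maxForests A = A.powerset.filter
      (fun F => (∀ j, inDeg F j ≤ 1) ∧ ∀ j, 0 < inDeg A j → 0 < inDeg F j) := by
  ext F
  simp only [maxForests, Finset.mem_filter, Finset.mem_powerset]
  constructor
  · rintro ⟨hFA, _, hforest, hmax⟩
    refine ⟨hFA, fun j => Finset.card_le_one.mpr ?_, fun j hj => ?_⟩
    · rintro ⟨x, j1⟩ hx ⟨z, j2⟩ hz
      rw [Finset.mem_filter] at hx hz
      obtain ⟨hx1, hx2⟩ := hx
      obtain ⟨hz1, hz2⟩ := hz
      simp only at hx2 hz2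
      subst hx2
      subst hz2
      exact Prod.ext (forest_unique_in hforest hx1 hz1) rfl
    · by_contra h0
      have h0 : inDeg F j = 0 := by omega
      obtain ⟨a, ha⟩ := Finset.card_pos.mp hj
      rw [Finset.mem_filter] at ha
      have haF : a ∉ F := fun hc => by
        have := inDeg_pos_of_mem (x := a.1) (j := j)
          (by rw [show ((a.1, j) : V × V) = a from Prod.ext rfl ha.2.symm]; exact hc)
        omega
      refine hmax a ha.1 haF (isForest_of (circuitFree_subset ?_ hA) ?_)
      · intro b hb
        rcases Finset.mem_insert.mp hb with rfl | hb
        · exact ha.1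
        · exact hFA hb
      · intro k
        rw [inDeg, Finset.filter_insert]
        split
        · rename_i hk
          have hFk : inDeg F k = 0 := by rw [← hk, ha.2]; exact h0
          rw [Finset.card_insert_of_notMem (fun hc => by
            have := Finset.card_pos.mpr ⟨a, hc⟩; rw [inDeg] at hFk; omega)]
          rw [inDeg] at hFk; omega
        · have hforest' : ∀ m, inDeg F m ≤ 1 := by
            intro m
            exact Finset.card_le_one.mpr (by
              rintro ⟨x, m1⟩ hx ⟨z, m2⟩ hz
              rw [Finset.mem_filter] at hx hz
              obtain ⟨hx1, hx2⟩ := hx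
              obtain ⟨hz1, hz2⟩ := hz
              simp only at hx2 hz2
              subst hx2
              subst hz2
              exact Prod.ext (forest_unique_in hforest hx1 hz1) rfl)
          exact hforest' k
  · rintro ⟨hFA, hdeg, hpos⟩
    refine ⟨hFA, hFA, isForest_of (circuitFree_subset hFA hA) hdeg, ?_⟩
    rintro a haA haF hforest'
    have hApos : 0 < inDeg A a.2 := inDeg_pos_of_mem (x := a.1) (j := a.2) (by rwa [Prod.mk.eta])
    obtain ⟨b, hb⟩ := Finset.card_pos.mp (hpos a.2 hApos)
    rw [Finset.mem_filter] at hb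
    have hbF : (b.1, a.2) ∈ F := by rw [show ((b.1, a.2) : V × V) = b from Prod.ext rfl hb.2.symm]; exact hb.1
    have hne : b.1 ≠ a.1 := fun hc => haF (by
      rw [show a = (b.1, a.2) from Prod.ext (by rw [hc]) rfl]; exact hbF)
    have h1 : (a.1, a.2) ∈ insert a F := by rw [Prod.mk.eta]; exact Finset.mem_insert_self a F
    have h2 : (b.1, a.2) ∈ insert a F := Finset.mem_insert_of_mem hbF
    exact hne (forest_unique_in hforest' h2 h1)

end Aux

section Count

variable {V : Type*} [Fintype V] [DecidableEq V]

lemma count_good {A : Finset (V × V)} :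
    (A.powerset.filter
      (fun F => (∀ j, inDeg F j ≤ 1) ∧ ∀ j, 0 < inDeg A j → 0 < inDeg F j)).card =
    ∏ i ∈ Finset.univ.filter (fun i => 0 < inDeg A i), inDeg A i := by
  classical
  set s : Finset V := Finset.univ.filter (fun i => 0 < inDeg A i) with hs
  set t : V → Finset (V × V) := fun j => A.filter (fun a => a.2 = j) with ht
  have key : (s.pi t).card = (A.powerset.filter
      (fun F => (∀ j, inDeg F j ≤ 1) ∧ ∀ j, 0 < inDeg A j → 0 < inDeg F j)).card := by
    refine Finset.card_bij (fun f _ => s.attach.image (fun j => f j.1 j.2)) ?_ ?_ ?_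
    · -- maps into target
      intro f hf
      have hmem := Finset.mem_pi.mp hf
      have himg : ∀ a, a ∈ s.attach.image (fun j => f j.1 j.2) ↔
          ∃ j, ∃ hj : j ∈ s, f j hj = a := by
        intro a
        simp [Finset.mem_image]
      have hprop : ∀ (j : V) (hj : j ∈ s), (f j hj).2 = j ∧ f j hj ∈ A := by
        intro j hj
        have := hmem j hj
        rw [ht, Finset.mem_filter] at this
        exact ⟨this.2, this.1⟩
      have hfilter : ∀ k, (s.attach.image (fun j => f j.1 j.2)).filter (fun a => a.2 = k) =
          if hk : k ∈ s then {f k hk} else ∅ := by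
        intro k
        split
        · rename_i hk
          ext a
          rw [Finset.mem_filter, himg, Finset.mem_singleton]
          constructor
          · rintro ⟨⟨j, hj, rfl⟩, hak⟩
            have : j = k := by rw [← (hprop j hj).1, hak]
            subst this; rfl
          · rintro rfl
            exact ⟨⟨k, hk, rfl⟩, (hprop k hk).1⟩
        · rename_i hk
          ext a
          rw [Finset.mem_filter, himg]
          simp only [Finset.notMem_empty, iff_false]
          rintro ⟨⟨j, hj, rfl⟩, hak⟩
          exact hk (by rw [← show j = k from by rw [← (hprop j hj).1, hak]]; exact hj)
      rw [Finset.mem_filter, Finset.mem_powerset]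
      refine ⟨?_, fun k => ?_, fun k hk => ?_⟩
      · intro a ha
        obtain ⟨j, hj, rfl⟩ := (himg a).mp ha
        exact (hprop j hj).2
      · rw [inDeg, hfilter k]
        split <;> simp
      · have hks : k ∈ s := by rw [hs]; exact Finset.mem_filter.mpr ⟨Finset.mem_univ _, hk⟩
        rw [inDeg, hfilter k, dif_pos hks]
        simp
    · -- injective
      intro f hf g hg heq
      have hmemf := Finset.mem_pi.mp hf
      have hmemg := Finset.mem_pi.mp hg
      have heq' : (s.attach.image (fun j => f j.1 j.2)) = s.attach.image (fun j => g j.1 j.2) := heq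
      funext j hj
      have h1 : f j hj ∈ s.attach.image (fun j => g j.1 j.2) := by
        rw [← heq']
        exact Finset.mem_image.mpr ⟨⟨j, hj⟩, Finset.mem_attach _ _, rfl⟩
      obtain ⟨⟨j', hj'⟩, _, hval⟩ := Finset.mem_image.mp h1
      have hj'2 : (g j' hj').2 = j' := by
        have := hmemg j' hj'
        rw [Finset.mem_filter] at this
        exact this.2
      have hf2 : (f j hj).2 = j := by
        have := hmemf j hj
        rw [Finset.mem_filter] at this
        exact this.2
      have : j' = j := by rw [← hj'2, hval, hf2]
      subst this
      exact hval.symm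
    · -- surjective
      rintro F hF
      rw [Finset.mem_filter, Finset.mem_powerset] at hF
      obtain ⟨hFA, hdeg, hpos⟩ := hF
      have hne : ∀ j ∈ s, (F.filter (fun a => a.2 = j)).Nonempty := by
        intro j hj
        rw [hs, Finset.mem_filter] at hj
        exact Finset.card_pos.mp (hpos j hj.2)
      refine ⟨fun j hj => (hne j hj).choose, ?_, ?_⟩
      · rw [Finset.mem_pi]
        intro j hj
        have := (hne j hj).choose_spec
        rw [Finset.mem_filter] at this
        rw [ht, Finset.mem_filter]
        exact ⟨hFA this.1, this.2⟩
      · ext a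
        rw [Finset.mem_image]
        constructor
        · rintro ⟨⟨j, hj⟩, _, rfl⟩
          have := (hne j hj).choose_spec
          rw [Finset.mem_filter] at this
          exact this.1
        · intro haF
          have hApos : 0 < inDeg A a.2 :=
            Finset.card_pos.mpr ⟨a, Finset.mem_filter.mpr ⟨hFA haF, rfl⟩⟩
          have has : a.2 ∈ s := by rw [hs]; exact Finset.mem_filter.mpr ⟨Finset.mem_univ _, hApos⟩
          refine ⟨⟨a.2, has⟩, Finset.mem_attach _ _, ?_⟩
          have hc := (hne a.2 has).choose_spec
          exact Finset.card_le_one.mp (hdeg a.2) _ hc _ (Finset.mem_filter.mpr ⟨haF, rfl⟩)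
  rw [← key, Finset.card_pi]
  rfl

end Count

/-- the number of maximal spanning forests of a circuit-free digraph equals
the product of the in-degrees of its non-source nodes. -/
theorem count_maxForests {V : Type*} [Fintype V] [DecidableEq V]
    (A : Finset (V × V)) (hA : CircuitFree A) :
    (maxForests A).card =
      ∏ i ∈ Finset.univ.filter (fun i => 0 < inDeg A i), inDeg A i := by
  rw [maxForests_eq hA, count_good]
end

section
/- The Average Forest measure satisfies coalitional monotonicity: if v and w are games with v(S)=w(S) for all S ≠ T and v(T) < w(T), then AF_i(N,v,Γ) ≤ AF_i(N,w,Γ) for every i ∈ T. -/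
open scoped Classical
open Finset

/-- coalitional monotonicity of the Average Forest measure. -/
theorem AF_coalitional_monotone {V : Type*} [Fintype V] [DecidableEq V]
    (A : Finset (V × V)) (hA : CircuitFree A)
    (v w : Finset V → ℝ) (T : Finset V)
    (heq : ∀ S : Finset V, S ≠ T → v S = w S) (hlt : v T < w T) :
    ∀ i ∈ T, AF v A i ≤ AF w A i := by
  intro i hi
  have key : ∀ F ∈ maxForests A, marg v F i ≤ marg w F i := by
    intro F hF
    have hFA : F ⊆ A := by
      simp only [maxForests, mem_filter, mem_powerset] at hF
      exact hF.1
    have hFcf : CircuitFree F := by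
      intro x hx
      exact hA x (Relation.TransGen.mono (fun a b hab => hFA hab) x x hx)
    unfold marg
    have h1 : v (succSet F i) ≤ w (succSet F i) := by
      by_cases hS : succSet F i = T
      · rw [hS]; exact le_of_lt hlt
      · rw [heq _ hS]
    have h2 : ∀ j ∈ immSucc F i, v (succSet F j) = w (succSet F j) := by
      intro j hj
      simp only [immSucc, mem_filter, mem_univ, true_and] at hj
      apply heq
      intro hS
      have hiS : i ∉ succSet F j := by
        simp only [succSet, mem_filter, mem_univ, true_and]
        intro hji
        exact hFcf i (Relation.TransGen.head' hj hji)
      rw [hS] at hiS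
      exact hiS hi
    have := Finset.sum_congr rfl h2
    linarith
  unfold AF
  rcases Nat.eq_zero_or_pos (maxForests A).card with h0 | hpos
  · simp [h0]
  · apply div_le_div_of_nonneg_right _ (Nat.cast_nonneg _)
    exact Finset.sum_le_sum key
end
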